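/- (Existence and uniqueness of the maximal representation.) Let N ≥ N' ≥ 0 be integers and let ξ', η' be partitions with |ξ'| + |η'| = N', with N ≥ |ξ'|. Let Θ be the set of partitions η with |ξ'| + |η| = N for which there exists a partition ζ with ζ ≼ η and ζ ≼ η'. Define η_max := (N − N' + η'₁ + η'₂, η'₃, η'₄, …). Then η_max is a partition, η_max ∈ Θ, and every η ∈ Θ satisfies η ⊴ η_max in the dominance order; in particular η_max is the unique maximal element of Θ. -/

import Mathlib

/-- A partition: a weakly decreasing sequence of nonnegative integers with finitely many
nonzero terms.  `parts i` is the `(i+1)`-st part (so indices are 0-based). -/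
structure Partn where
  /-- the parts, 0-indexed -/
  parts : ℕ → ℕ
  antitone : ∀ ⦃i j : ℕ⦄, i ≤ j → parts j ≤ parts i
  eventually_zero : ∃ N : ℕ, ∀ i : ℕ, N ≤ i → parts i = 0

/-- `|λ|`, the sum of all parts. -/
noncomputable def Partn.size (p : Partn) : ℕ := ∑ᶠ i, p.parts i

/-- `ζ ≼ η` iff `η_{i+1} ≤ ζ_i ≤ η_i` for all `i ≥ 1` (here with 0-based indices). -/
def Partn.Prec (ζ η : Partn) : Prop :=
  ∀ i : ℕ, η.parts (i + 1) ≤ ζ.parts i ∧ ζ.parts i ≤ η.parts i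

/-- Dominance order `λ ⊴ μ`: all partial sums of `λ` are at most those of `μ`. -/
def Partn.DomLE (l m : Partn) : Prop :=
  ∀ n : ℕ, ∑ i ∈ Finset.range n, l.parts i ≤ ∑ i ∈ Finset.range n, m.parts i

/-- `m = l ∪ (x)`: the partition `m` is obtained from `l` by inserting one extra part
equal to `x` (at some position `j`, all other parts being kept in order). -/
def Partn.IsInsert (l : Partn) (x : ℕ) (m : Partn) : Prop :=
  ∃ j : ℕ, (∀ i : ℕ, i < j → m.parts i = l.parts i) ∧ m.parts j = x ∧
    ∀ i : ℕ, m.parts (j + 1 + i) = l.parts (j + i)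

/-- The set `Θ` of partitions `η` with `|ξ'| + |η| = N` admitting a partition `ζ`
with `ζ ≼ η` and `ζ ≼ η'`. -/
def Theta (xi' eta' : Partn) (N : ℕ) : Set Partn :=
  {eta | xi'.size + eta.size = N ∧ ∃ ζ : Partn, ζ.Prec eta ∧ ζ.Prec eta'}

/-- The size equals a partial sum beyond the vanishing point. -/
lemma Partn.size_eq_sum (p : Partn) {M : ℕ} (h : ∀ i, M ≤ i → p.parts i = 0) :
    p.size = ∑ i ∈ Finset.range M, p.parts i := by
  apply finsum_eq_sum_of_support_subset
  intro x hx
  simp only [Finset.coe_range, Set.mem_Iio]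
  by_contra hb
  exact hx (h x (not_lt.mp hb))

/-- existence and uniqueness of the maximal representation:
`η_max := (N − N' + η'₁ + η'₂, η'₃, η'₄, …)` is a partition, belongs to `Θ`, and
dominates every element of `Θ`; in particular it is the unique maximal element. -/
theorem maximal_representation (N N' : ℕ) (hN' : N' ≤ N)
    (xi' eta' : Partn) (hsum : xi'.size + eta'.size = N') (hle : xi'.size ≤ N) :
    ∃ etamax : Partn,
      etamax.parts 0 = N - N' + eta'.parts 0 + eta'.parts 1 ∧
      (∀ i : ℕ, etamax.parts (i + 1) = eta'.parts (i + 2)) ∧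
      etamax ∈ Theta xi' eta' N ∧
      (∀ eta ∈ Theta xi' eta' N, eta.DomLE etamax) ∧
      (∀ eta ∈ Theta xi' eta' N, (∀ eta₂ ∈ Theta xi' eta' N, eta₂.DomLE eta) →
        eta.parts = etamax.parts) := by
  obtain ⟨M', hM'⟩ := eta'.eventually_zero
  -- define etamax
  set f : ℕ → ℕ := fun i => match i with
    | 0 => N - N' + eta'.parts 0 + eta'.parts 1
    | (i + 1) => eta'.parts (i + 2) with hf
  have hf0 : f 0 = N - N' + eta'.parts 0 + eta'.parts 1 := rfl
  have hfs : ∀ i, f (i + 1) = eta'.parts (i + 2) := fun i => rfl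
  have hanti : ∀ ⦃i j : ℕ⦄, i ≤ j → f j ≤ f i := by
    intro i j hij
    match i, j with
    | 0, 0 => exact le_rfl
    | 0, (j + 1) =>
        rw [hf0, hfs]
        have := eta'.antitone (show 1 ≤ j + 2 by omega)
        omega
    | (i + 1), (j + 1) =>
        rw [hfs, hfs]
        exact eta'.antitone (by omega)
  have hzero : ∀ i : ℕ, M' + 1 ≤ i → f i = 0 := by
    intro i hi
    match i, hi with
    | (i + 1), hi => rw [hfs]; exact hM' _ (by omega)
  set E : Partn := ⟨f, hanti, M' + 1, hzero⟩ with hE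
  have hEp : E.parts = f := rfl
  -- size of eta' in terms of partial sums
  have heta'size : ∀ K : ℕ, M' ≤ K → eta'.size = ∑ i ∈ Finset.range K, eta'.parts i :=
    fun K hK => eta'.size_eq_sum (fun i hi => hM' i (le_trans hK hi))
  -- size of E
  have hEsize : E.size = (N - N') + eta'.size := by
    rw [E.size_eq_sum hzero, hEp, Finset.sum_range_succ' f M',
      heta'size (M' + 2) (by omega), Finset.sum_range_succ' _ (M' + 1),
      Finset.sum_range_succ' _ M']
    simp only [hfs, hf0]
    ring
  have hsizeE : xi'.size + E.size = N := by omega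
  -- the dominance statement
  have hdom : ∀ eta ∈ Theta xi' eta' N, eta.DomLE E := by
    rintro eta ⟨hetasize, ζ, hζeta, hζeta'⟩ n
    match n with
    | 0 => simp
    | (m + 1) =>
      obtain ⟨Mη, hMη⟩ := eta.eventually_zero
      set M : ℕ := max (max Mη M') (m + 2) with hM
      have h1 : eta.size = ∑ i ∈ Finset.range M, eta.parts i :=
        eta.size_eq_sum (fun i hi => hMη i (by omega))
      have h2 : eta'.size = ∑ i ∈ Finset.range (M + 1), eta'.parts i :=
        heta'size (M + 1) (by omega)
      -- split the sums
      have h3 : ∑ i ∈ Finset.range M, eta.parts i =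
          ∑ i ∈ Finset.range (m + 1), eta.parts i +
          ∑ i ∈ Finset.Ico (m + 1) M, eta.parts i := by
        simp only [Finset.range_eq_Ico]
        exact (Finset.sum_Ico_consecutive _ (by omega : 0 ≤ m + 1) (by omega : m + 1 ≤ M)).symm
      have h4 : ∑ i ∈ Finset.range (M + 1), eta'.parts i =
          ∑ i ∈ Finset.range (m + 2), eta'.parts i +
          ∑ i ∈ Finset.Ico (m + 2) (M + 1), eta'.parts i := by
        simp only [Finset.range_eq_Ico]
        exact (Finset.sum_Ico_consecutive _ (by omega : 0 ≤ m + 2) (by omega : m + 2 ≤ M + 1)).symm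
      -- key tail comparison
      have hkey : ∑ i ∈ Finset.Ico (m + 2) (M + 1), eta'.parts i ≤
          ∑ i ∈ Finset.Ico (m + 1) M, eta.parts i := by
        rw [Finset.sum_Ico_eq_sum_range, Finset.sum_Ico_eq_sum_range]
        have hlen : M + 1 - (m + 2) = M - (m + 1) := by omega
        rw [hlen]
        apply Finset.sum_le_sum
        intro k _
        calc eta'.parts (m + 2 + k) = eta'.parts ((m + 1 + k) + 1) := by ring_nf
          _ ≤ ζ.parts (m + 1 + k) := (hζeta' (m + 1 + k)).1
          _ ≤ eta.parts (m + 1 + k) := (hζeta (m + 1 + k)).2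
      -- expand the target sum over E
      have h5 : ∑ i ∈ Finset.range (m + 1), E.parts i =
          (N - N' + eta'.parts 0 + eta'.parts 1) +
          ∑ i ∈ Finset.range m, eta'.parts (i + 2) := by
        rw [hEp, Finset.sum_range_succ' f m]
        simp only [hfs, hf0]
        ring
      have h6 : ∑ i ∈ Finset.range (m + 2), eta'.parts i =
          eta'.parts 0 + eta'.parts 1 + ∑ i ∈ Finset.range m, eta'.parts (i + 2) := by
        rw [Finset.sum_range_succ' _ (m + 1), Finset.sum_range_succ' _ m]
        ring
      omega
  refine ⟨E, hf0, hfs, ⟨hsizeE, ?_⟩, hdom, ?_⟩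
  · -- membership: ζ := (η'₂, η'₃, …)
    refine ⟨⟨fun i => eta'.parts (i + 1), fun i j hij => eta'.antitone (by omega),
      M', fun i hi => hM' _ (by omega)⟩, ?_, ?_⟩
    · intro i
      match i with
      | 0 =>
        refine ⟨?_, ?_⟩
        · show E.parts 1 ≤ eta'.parts 1
          rw [hEp, hfs]
          exact eta'.antitone (by omega)
        · show eta'.parts 1 ≤ E.parts 0
          rw [hEp, hf0]; omega
      | (k + 1) =>
        refine ⟨?_, ?_⟩
        · show E.parts (k + 2) ≤ eta'.parts (k + 2)
          rw [hEp, hfs]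
          exact eta'.antitone (by omega)
        · show eta'.parts (k + 2) ≤ E.parts (k + 1)
          rw [hEp, hfs]
    · intro i
      exact ⟨le_rfl, eta'.antitone (by omega)⟩
  · -- uniqueness
    intro eta heta hmax
    have h1 : eta.DomLE E := hdom eta heta
    have h2 : E.DomLE eta := hmax E ⟨hsizeE, by
      refine ⟨⟨fun i => eta'.parts (i + 1), fun i j hij => eta'.antitone (by omega),
        M', fun i hi => hM' _ (by omega)⟩, ?_, ?_⟩
      · intro i
        match i with
        | 0 =>
          refine ⟨?_, ?_⟩
          · show E.parts 1 ≤ eta'.parts 1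
            rw [hEp, hfs]
            exact eta'.antitone (by omega)
          · show eta'.parts 1 ≤ E.parts 0
            rw [hEp, hf0]; omega
        | (k + 1) =>
          refine ⟨?_, ?_⟩
          · show E.parts (k + 2) ≤ eta'.parts (k + 2)
            rw [hEp, hfs]
            exact eta'.antitone (by omega)
          · show eta'.parts (k + 2) ≤ E.parts (k + 1)
            rw [hEp, hfs]
      · intro i
        exact ⟨le_rfl, eta'.antitone (by omega)⟩⟩
    have hS : ∀ n : ℕ, ∑ i ∈ Finset.range n, eta.parts i = ∑ i ∈ Finset.range n, E.parts i :=
      fun n => le_antisymm (h1 n) (h2 n)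
    funext i
    have ha := hS i
    have hb := hS (i + 1)
    rw [Finset.sum_range_succ, Finset.sum_range_succ] at hb
    omega
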